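/- For every real ζ with 0 ≤ ζ < 0.046, the second derivative of ξ₁ at ζ satisfies −27.336 ≤ ξ₁''(ζ) < −24.822. -/

import Mathlib

/-- The coefficient `b(ζ)` (with `χ = 0.454`). -/
noncomputable def bcoef (ζ : ℝ) : ℝ := -0.18 * 0.454 + 0.09 * ζ - 2.337

/-- The coefficient `c(ζ)` (with `χ = 0.454`). -/
noncomputable def ccoef (ζ : ℝ) : ℝ :=
  16 * 0.454 ^ 2 - 32 * ζ ^ 2 - 16 * 0.454 + 8 * ζ - 16 * 0.454 * ζ + 4

/-- The discriminant `Δ(ζ) = b(ζ)² − 4ac(ζ)` with `a = 2.382`. -/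
noncomputable def Δcoef (ζ : ℝ) : ℝ := (bcoef ζ) ^ 2 - 4 * 2.382 * (ccoef ζ)

/-- The root `ξ₁(ζ) = (−b(ζ) − √Δ(ζ)) / (2a)` with `a = 2.382`. -/
noncomputable def xi1 (ζ : ℝ) : ℝ := (-(bcoef ζ) - Real.sqrt (Δcoef ζ)) / (2 * 2.382)

lemma bcoef_eq : bcoef = fun z : ℝ => 9/100 * z - 241872/100000 := by
  funext z; unfold bcoef; norm_num; ring

lemma Δcoef_eq : Δcoef = fun z : ℝ =>
    3049041/10000 * z^2 + -2327493/312500 * z + 215922909/39062500 := by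
  funext z; unfold Δcoef bcoef ccoef; norm_num; ring

lemma Δpos (z : ℝ) : 0 < Δcoef z := by
  rw [Δcoef_eq]
  nlinarith [sq_nonneg (2*(3049041/10000)*z + -2327493/312500)]

noncomputable def d1 (z : ℝ) : ℝ :=
  (-(9/100) - (3049041/10000 * (2*z) + -2327493/312500) / (2 * Real.sqrt (Δcoef z)))
    / (2 * 2.382)

lemma hΔ' (z : ℝ) : HasDerivAt Δcoef (3049041/10000 * (2*z) + -2327493/312500) z := by
  rw [Δcoef_eq]
  have h := (((hasDerivAt_pow 2 z).const_mul ((3049041:ℝ)/10000)).add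
      ((hasDerivAt_id z).const_mul ((-2327493:ℝ)/312500))).add_const ((215922909:ℝ)/39062500)
  convert h using 1
  any_goals rfl
  simp
  try ring

lemma hsqrtΔ (z : ℝ) : HasDerivAt (fun x => Real.sqrt (Δcoef x))
    (1/(2*Real.sqrt (Δcoef z)) * (3049041/10000 * (2*z) + -2327493/312500)) z :=
  (Real.hasDerivAt_sqrt (Δpos z).ne').comp z (hΔ' z)

lemma hxi (z : ℝ) : HasDerivAt xi1 (d1 z) z := by
  have hb : HasDerivAt bcoef (9/100) z := by
    rw [bcoef_eq]
    simpa using ((hasDerivAt_id z).const_mul ((9:ℝ)/100)).sub_const ((241872:ℝ)/100000)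
  have h := (hb.neg.sub (hsqrtΔ z)).div_const (2*2.382)
  unfold xi1
  convert h using 1
  any_goals rfl
  unfold d1; ring

lemma deriv_xi1 : deriv xi1 = d1 := funext fun z => (hxi z).deriv

/-- for `0 ≤ ζ < 0.046`, the second derivative of `ξ₁` satisfies
`−27.336 ≤ ξ₁''(ζ) < −24.822`. -/
theorem xi1_second_deriv_bounds (ζ : ℝ) (h0 : 0 ≤ ζ) (h1 : ζ < 0.046) :
    -27.336 ≤ deriv (deriv xi1) ζ ∧ deriv (deriv xi1) ζ < -24.822 := by
  have hD := Δpos ζ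
  set s := Real.sqrt (Δcoef ζ) with hsdef
  have hs : 0 < s := Real.sqrt_pos.2 hD
  have hs2 : s^2 = Δcoef ζ := Real.sq_sqrt hD.le
  have hs2p : s^2 = 3049041/10000 * ζ^2 + -2327493/312500 * ζ + 215922909/39062500 := by
    rw [hs2, Δcoef_eq]
  -- second derivative
  have hf : HasDerivAt (fun z : ℝ => 3049041/10000 * (2*z) + -2327493/312500)
      (3049041/10000 * 2) ζ := by
    have h := (((hasDerivAt_id ζ).const_mul (2:ℝ)).const_mul ((3049041:ℝ)/10000)).add_const
      ((-2327493:ℝ)/312500)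
    convert h using 1; (any_goals rfl); ring
  have hg : HasDerivAt (fun z : ℝ => 2 * Real.sqrt (Δcoef z))
      (2 * (1/(2*s) * (3049041/10000 * (2*ζ) + -2327493/312500))) ζ :=
    (hsqrtΔ ζ).const_mul 2
  have hg0 : 2 * Real.sqrt (Δcoef ζ) ≠ 0 := by positivity
  have hq := hf.div hg hg0
  have hd2 : HasDerivAt d1
      ((0 - (3049041/10000 * 2 * (2 * Real.sqrt (Δcoef ζ)) -
        (3049041/10000 * (2*ζ) + -2327493/312500) *
          (2 * (1/(2*s) * (3049041/10000 * (2*ζ) + -2327493/312500)))) /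
        (2 * Real.sqrt (Δcoef ζ))^2) / (2*2.382)) ζ := by
    have h := ((hasDerivAt_const ζ (-(9/100 : ℝ))).sub hq).div_const (2*2.382)
    unfold d1
    convert h using 1
    any_goals rfl
  have hkey : deriv (deriv xi1) ζ = -(27411443271/78125000) / (Δcoef ζ * s) := by
    rw [deriv_xi1, hd2.deriv, ← hsdef, ← hs2]
    have hnum : 3049041/10000 * 2 * (2 * s) -
        (3049041/10000 * (2*ζ) + -2327493/312500) *
          (2 * (1/(2*s) * (3049041/10000 * (2*ζ) + -2327493/312500)))
        = (4*(3049041/10000) * s^2 -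
            (3049041/10000 * (2*ζ) + -2327493/312500)^2) / s := by
      field_simp; ring
    have hval : 4*(3049041/10000) * s^2 -
        (3049041/10000 * (2*ζ) + -2327493/312500)^2 = 32647028935761/4882812500 := by
      rw [hs2p]; ring
    rw [hnum, hval]
    field_simp
    ring
  have hDl : (10882342978587/1985052734375 : ℝ) ≤ Δcoef ζ := by
    rw [Δcoef_eq]
    nlinarith [sq_nonneg (2*(3049041/10000)*ζ + -2327493/312500)]
  have hDu : Δcoef ζ ≤ (14575491441/2500000000 : ℝ) := by
    rw [Δcoef_eq]
    have h2 : (0:ℝ) ≤ (46/1000 - ζ) * (3049041/10000*(ζ + 46/1000) + -2327493/312500) := by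
      have ha : (0:ℝ) ≤ 46/1000 - ζ := by norm_num at h1 ⊢; linarith
      have hbp : (0:ℝ) ≤ 3049041/10000*(ζ + 46/1000) + -2327493/312500 := by nlinarith
      exact mul_nonneg ha hbp
    nlinarith [h2]
  have hsl : (2341397/1000000 : ℝ) ≤ s := by
    have h := Real.sqrt_le_sqrt (show ((2341397:ℝ)/1000000)^2 ≤ Δcoef ζ by nlinarith)
    rwa [Real.sqrt_sq (by norm_num)] at h
  have hsu : s ≤ (24146/10000 : ℝ) := by
    have h := Real.sqrt_le_sqrt (show Δcoef ζ ≤ ((24146:ℝ)/10000)^2 by nlinarith)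
    rwa [Real.sqrt_sq (by norm_num)] at h
  have hDs : 0 < Δcoef ζ * s := mul_pos hD hs
  constructor
  · rw [hkey, neg_div, neg_le_neg_iff, div_le_iff₀ hDs]
    have hm : (10882342978587/1985052734375 : ℝ) * (2341397/1000000) ≤ Δcoef ζ * s :=
      mul_le_mul hDl hsl (by norm_num) hD.le
    nlinarith [hm]
  · rw [hkey, neg_div, neg_lt_neg_iff, lt_div_iff₀ hDs]
    have hm : Δcoef ζ * s ≤ (14575491441/2500000000 : ℝ) * (24146/10000) :=
      mul_le_mul hDu hsu hs.le (by norm_num)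
    nlinarith [hm]
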